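/- arXiv:1211.1993 — 2 statements merged into one kernel-verified Lean document; each statement's English description precedes it below -/
import Mathlib

section
/- With K and f : K → T as in the tree-of-spaces setup, if each vertex space f⁻¹(v) is δ-hyperbolic (with uniform δ) as a geodesic space, then K is δ'-hyperbolic for some δ' depending only on δ. -/
/-- The real-valued path metric of a graph (unit length edges). -/
noncomputable def gdist {V : Type*} (G : SimpleGraph V) (x y : V) : ℝ := (G.dist x y : ℝ)

/-- Gromov product of `x` and `y` at `w` in the graph metric. -/
noncomputable def gprod {V : Type*} (G : SimpleGraph V) (x y w : V) : ℝ :=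
  (gdist G x w + gdist G y w - gdist G x y) / 2

/-- `δ`-hyperbolicity of a graph via the Gromov four-point condition. -/
def GraphHyperbolic {V : Type*} (G : SimpleGraph V) (δ : ℝ) : Prop :=
  ∀ x y z w : V, min (gprod G x y w) (gprod G y z w) ≤ gprod G x z w + δ

/-- `f : K → T` exhibits `K` as a tree of spaces over the tree `T`. -/
def TreeOfSpaces {VK VT : Type*} (K : SimpleGraph VK) (T : SimpleGraph VT)
    (f : VK → VT) : Prop :=
  T.IsTree ∧
  (∀ a b : VK, K.Adj a b → f a = f b ∨ T.Adj (f a) (f b)) ∧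
  (∀ t : VT, (f ⁻¹' {t}).Nonempty → (K.induce (f ⁻¹' {t})).Connected) ∧
  (∀ s t : VT, T.Adj s t → ∃! p : VK × VK, f p.1 = s ∧ f p.2 = t ∧ K.Adj p.1 p.2)


open SimpleGraph

section TreeLemmas

variable {V : Type} [DecidableEq V] {T : SimpleGraph V}

lemma dcomm (T : SimpleGraph V) (u v : V) : T.dist u v = T.dist v u :=
  SimpleGraph.dist_comm

/-- A vertex on a geodesic walk splits the distance. -/
lemma geo_split (hc : T.Connected) {u v w : V} (p : T.Walk u v)
    (hp : p.length = T.dist u v) (hw : w ∈ p.support) :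
    T.dist u w + T.dist w v = T.dist u v := by
  have h1 := SimpleGraph.dist_le (p.takeUntil w hw)
  have h2 := SimpleGraph.dist_le (p.dropUntil w hw)
  have h3 : (p.takeUntil w hw).length + (p.dropUntil w hw).length = p.length := by
    rw [← SimpleGraph.Walk.length_append, SimpleGraph.Walk.take_spec]
  have h4 := hc.dist_triangle (u := u) (v := w) (w := v)
  omega

variable (hT : T.IsTree)
include hT

/-- In a tree, every path realizes the distance. -/
lemma tree_path_length {a b : V} (p : T.Walk a b) (hp : p.IsPath) :
    p.length = T.dist a b := by
  obtain ⟨q, hq, hql⟩ := hT.isConnected.exists_path_of_dist a b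
  have := hT.IsAcyclic.path_unique ⟨p, hp⟩ ⟨q, hq⟩
  rw [Subtype.ext_iff] at this
  simp only at this
  rw [this, hql]

/-- Dichotomy: distances to the two endpoints of an edge differ by one. -/
lemma tree_dichotomy {s t : V} (hst : T.Adj s t) (c : V) :
    T.dist c s + 1 = T.dist c t ∨ T.dist c t + 1 = T.dist c s := by
  obtain ⟨p, hp, hpl⟩ := hT.isConnected.exists_path_of_dist s c
  by_cases hmem : t ∈ p.support
  · right
    have h0 := geo_split hT.isConnected p hpl hmem
    have h1 : T.dist s t = 1 := SimpleGraph.dist_eq_one_iff_adj.mpr hst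
    have e1 := dcomm T s c; have e2 := dcomm T t c
    omega
  · left
    have hcons : (Walk.cons hst.symm p).IsPath := hp.cons hmem
    have h0 := tree_path_length hT _ hcons
    rw [Walk.length_cons, hpl] at h0
    have e1 := dcomm T s c; have e2 := dcomm T t c
    omega

/-- Existence of the first step from `m` towards `a`. -/
lemma tree_step_exists {m a : V} (hma : m ≠ a) :
    ∃ s, T.Adj m s ∧ T.dist s a + 1 = T.dist m a := by
  obtain ⟨p, hp, hpl⟩ := hT.isConnected.exists_path_of_dist m a
  cases p with
  | nil => exact absurd rfl hma
  | cons h q =>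
    rename_i s
    refine ⟨s, h, ?_⟩
    have h1 := SimpleGraph.dist_le q
    have h2 := hT.isConnected.dist_triangle (u := m) (v := s) (w := a)
    have h3 : T.dist m s ≤ 1 := SimpleGraph.dist_le (Walk.cons h Walk.nil)
    rw [Walk.length_cons] at hpl
    omega

/-- Uniqueness of the first step. -/
lemma tree_step_unique {m a s s' : V} (h1 : T.Adj m s) (h2 : T.Adj m s')
    (hd1 : T.dist s a + 1 = T.dist m a) (hd2 : T.dist s' a + 1 = T.dist m a) :
    s = s' := by
  obtain ⟨p, hp, hpl⟩ := hT.isConnected.exists_path_of_dist s a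
  obtain ⟨q, hq, hql⟩ := hT.isConnected.exists_path_of_dist s' a
  have hm1 : m ∉ p.support := by
    intro hmem
    have := geo_split hT.isConnected p hpl hmem
    have : T.dist s m = 0 := by omega
    have : s = m := by
      have := SimpleGraph.Connected.dist_eq_zero_iff hT.isConnected |>.mp this
      exact this
    exact h1.ne this.symm
  have hm2 : m ∉ q.support := by
    intro hmem
    have := geo_split hT.isConnected q hql hmem
    have : T.dist s' m = 0 := by omega
    have : s' = m := (SimpleGraph.Connected.dist_eq_zero_iff hT.isConnected).mp this
    exact h2.ne this.symm
  have hP : (Walk.cons h1 p).IsPath := hp.cons hm1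
  have hQ : (Walk.cons h2 q).IsPath := hq.cons hm2
  have := hT.IsAcyclic.path_unique ⟨_, hP⟩ ⟨_, hQ⟩
  rw [Subtype.ext_iff] at this
  simp only at this
  have := congrArg (fun w => Walk.getVert w 1) this
  simpa using this

end TreeLemmas

section More
variable {V : Type} [DecidableEq V] {T : SimpleGraph V} (hT : T.IsTree)
include hT

/-- If the first step from `a` towards `b` moves away from `c`, then `a` is between `c` and `b`. -/
lemma tree_away : ∀ n {a a₁ b c : V}, T.dist a b = n → T.Adj a a₁ →
    T.dist a₁ b + 1 = T.dist a b → T.dist a c + 1 = T.dist a₁ c →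
    T.dist c b = T.dist c a + T.dist a b := by
  intro n
  induction n with
  | zero => intro a a₁ b c hn _ hstep _; omega
  | succ n ih =>
    intro a a₁ b c hn hadj hstep haway
    by_cases hb : a₁ = b
    · subst hb
      have h0 : T.dist a₁ a₁ = 0 := SimpleGraph.dist_self
      have e1 := dcomm T a c; have e2 := dcomm T a₁ c
      omega
    · obtain ⟨a₂, ha₂, hstep₂⟩ := tree_step_exists hT hb
      have ha₂c : T.dist a₁ c + 1 = T.dist a₂ c := by
        rcases tree_dichotomy hT ha₂ c with h | h
        · have e1 := dcomm T a₁ c; have e2 := dcomm T a₂ c; omega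
        · exfalso
          have e1 := dcomm T a₁ c; have e2 := dcomm T a₂ c
          have haa₂ : a = a₂ := by
            refine tree_step_unique hT (a := c) hadj.symm ha₂ ?_ ?_ <;> omega
          subst haa₂
          omega
      have hd : T.dist a₁ b = n := by omega
      have hrec := ih hd ha₂ hstep₂ ha₂c
      have e1 := dcomm T a c; have e2 := dcomm T a₁ c
      omega

/-- first steps towards `b` and `c` differ: `m` is between `b` and `c`. -/
lemma tree_sep {m s₁ s₂ b c : V} (h₁ : T.Adj m s₁) (h₂ : T.Adj m s₂) (hss : s₁ ≠ s₂)
    (hd₁ : T.dist s₁ b + 1 = T.dist m b) (hd₂ : T.dist s₂ c + 1 = T.dist m c) :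
    T.dist b m + T.dist m c = T.dist b c := by
  have hs₁c : T.dist m c + 1 = T.dist s₁ c := by
    rcases tree_dichotomy hT h₁ c with h | h
    · have e1 := dcomm T m c; have e2 := dcomm T s₁ c; omega
    · exfalso
      have e1 := dcomm T m c; have e2 := dcomm T s₁ c
      exact hss (tree_step_unique hT (a := c) h₁ h₂ (by omega) (by omega))
  have := tree_away hT (T.dist m b) rfl h₁ hd₁ hs₁c
  have e1 := dcomm T b m; have e2 := dcomm T c b; have e3 := dcomm T m c
  omega

/-- Median of three vertices in a tree. -/
lemma tree_median : ∀ n (a b c : V), T.dist a b + T.dist a c = n →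
    ∃ m, T.dist a m + T.dist m b = T.dist a b ∧
         T.dist a m + T.dist m c = T.dist a c ∧
         T.dist b m + T.dist m c = T.dist b c := by
  intro n
  induction n using Nat.strong_induction_on with
  | _ n ih =>
    intro a b c hn
    by_cases hab : a = b
    · subst hab
      refine ⟨a, ?_, ?_, ?_⟩ <;> simp [SimpleGraph.dist_self]
    by_cases hac : a = c
    · subst hac
      refine ⟨a, ?_, ?_, ?_⟩ <;>
        simp [SimpleGraph.dist_self, dcomm T a b]
    obtain ⟨s₁, hs₁, hd₁⟩ := tree_step_exists hT hab
    obtain ⟨s₂, hs₂, hd₂⟩ := tree_step_exists hT hac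
    by_cases hss : s₁ = s₂
    · subst hss
      obtain ⟨m, h1, h2, h3⟩ := ih (T.dist s₁ b + T.dist s₁ c) (by omega) s₁ b c rfl
      have hds : T.dist a s₁ ≤ 1 := SimpleGraph.dist_le (Walk.cons hs₁ Walk.nil)
      refine ⟨m, ?_, ?_, h3⟩
      · have t1 := hT.isConnected.dist_triangle (u := a) (v := m) (w := b)
        have t2 := hT.isConnected.dist_triangle (u := a) (v := s₁) (w := m)
        omega
      · have t1 := hT.isConnected.dist_triangle (u := a) (v := m) (w := c)
        have t2 := hT.isConnected.dist_triangle (u := a) (v := s₁) (w := m)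
        omega
    · refine ⟨a, by simp [SimpleGraph.dist_self], by simp [SimpleGraph.dist_self], ?_⟩
      exact tree_sep hT hs₁ hs₂ hss hd₁ hd₂

end More

section KLemmas

open Classical in
/-- canonical first step in a tree (junk value `m` if `m = a`). -/
noncomputable def tstep {V : Type} [DecidableEq V] {T : SimpleGraph V} (hT : T.IsTree) (m a : V) : V :=
  if h : m ≠ a then (tree_step_exists hT h).choose else m

lemma tstep_adj {V : Type} [DecidableEq V] {T : SimpleGraph V} (hT : T.IsTree) {m a : V} (h : m ≠ a) :
    T.Adj m (tstep hT m a) := by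
  rw [tstep, dif_pos h]
  exact (tree_step_exists hT h).choose_spec.1

lemma tstep_dist {V : Type} [DecidableEq V] {T : SimpleGraph V} (hT : T.IsTree) {m a : V} (h : m ≠ a) :
    T.dist (tstep hT m a) a + 1 = T.dist m a := by
  rw [tstep, dif_pos h]
  exact (tree_step_exists hT h).choose_spec.2

lemma tree_not_bet {V : Type} [DecidableEq V] {T : SimpleGraph V} (hT : T.IsTree) {m a c : V}
    (h : T.dist a m + T.dist m c ≠ T.dist a c) :
    m ≠ a ∧ m ≠ c ∧ tstep hT m a = tstep hT m c := by
  have hma : m ≠ a := by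
    intro h'; subst h'; simp [SimpleGraph.dist_self] at h
  have hmc : m ≠ c := by
    intro h'; subst h'; simp [SimpleGraph.dist_self] at h
  refine ⟨hma, hmc, ?_⟩
  by_contra hne
  have := tree_sep hT (tstep_adj hT hma) (tstep_adj hT hmc) hne
    (tstep_dist hT hma) (tstep_dist hT hmc)
  have e1 := dcomm T a m
  omega

lemma tree_bet_of_step_ne {V : Type} [DecidableEq V] {T : SimpleGraph V} (hT : T.IsTree) {m a c : V}
    (hma : m ≠ a) (hmc : m ≠ c) (hne : tstep hT m a ≠ tstep hT m c) :
    T.dist a m + T.dist m c = T.dist a c := by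
  have := tree_sep hT (tstep_adj hT hma) (tstep_adj hT hmc) hne
    (tstep_dist hT hma) (tstep_dist hT hmc)
  have e1 := dcomm T a m
  omega

lemma tree_step_ne_of_bet {V : Type} [DecidableEq V] {T : SimpleGraph V} (hT : T.IsTree) {m a c : V}
    (hb : T.dist a m + T.dist m c = T.dist a c) (hma : m ≠ a) (hmc : m ≠ c) :
    tstep hT m a ≠ tstep hT m c := by
  intro he
  have h1 := tstep_dist hT hma
  have h2 := tstep_dist hT hmc
  rw [he] at h1
  have t1 := hT.isConnected.dist_triangle (u := a) (v := tstep hT m c) (w := c)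
  have e1 := dcomm T a (tstep hT m c)
  have e2 := dcomm T a m
  have hp : 1 ≤ T.dist m a := by
    have := SimpleGraph.Connected.pos_dist_of_ne hT.isConnected hma
    omega
  have hp2 : 1 ≤ T.dist m c := by
    have := SimpleGraph.Connected.pos_dist_of_ne hT.isConnected hmc
    omega
  omega

lemma tree_bet_trans {V : Type} [DecidableEq V] {T : SimpleGraph V} (hT : T.IsTree) {m a b c : V}
    (h1 : T.dist a m + T.dist m c ≠ T.dist a c)
    (h2 : T.dist a m + T.dist m b = T.dist a b) :
    T.dist b m + T.dist m c = T.dist b c := by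
  obtain ⟨hma, hmc, hs⟩ := tree_not_bet hT h1
  by_cases hmb : m = b
  · subst hmb
    have h0 : T.dist m m = 0 := SimpleGraph.dist_self
    have e1 := dcomm T m m
    omega
  · have hne := tree_step_ne_of_bet hT h2 hma hmb
    rw [hs] at hne
    exact tree_bet_of_step_ne hT hmb hmc hne.symm

variable {VK VT : Type} [DecidableEq VK] [DecidableEq VT]
  {K : SimpleGraph VK} {T : SimpleGraph VT} {f : VK → VT}

/-- Any walk between opposite sides of the tree edge `(s,t)` crosses the unique edge `(a,b)`. -/
lemma cross_walk (hT : T.IsTree) (hK : K.Connected)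
    (hAdj : ∀ a b : VK, K.Adj a b → f a = f b ∨ T.Adj (f a) (f b))
    {s t : VT} (hst : T.Adj s t) {a b : VK} (ha : f a = s) (hb : f b = t) (hab : K.Adj a b)
    (huniq : ∀ q : VK × VK, f q.1 = s → f q.2 = t → K.Adj q.1 q.2 → q = (a, b))
    {u v : VK} (w : K.Walk u v)
    (hu : T.dist (f u) s + 1 = T.dist (f u) t)
    (hv : T.dist (f v) t + 1 = T.dist (f v) s) :
    K.dist u a + 1 + K.dist b v ≤ w.length := by
  induction w with
  | nil => omega
  | cons h' w' ih =>
    rename_i u u' v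
    by_cases hside : T.dist (f u') s + 1 = T.dist (f u') t
    · have hrec := ih hside hv
      have t1 := hK.dist_triangle (u := u) (v := u') (w := a)
      have t2 : K.dist u u' ≤ 1 := SimpleGraph.dist_le (Walk.cons h' Walk.nil)
      rw [Walk.length_cons]
      omega
    · -- the edge (u, u') crosses
      have hfne : f u ≠ f u' := by
        intro he; rw [he] at hu; exact hside hu
      have hTadj : T.Adj (f u) (f u') := (hAdj u u' h').resolve_left hfne
      have hside' : T.dist (f u') t + 1 = T.dist (f u') s := by
        rcases tree_dichotomy hT hst (f u') with hh | hh
        · exact absurd hh hside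
        · exact hh
      -- show f u = s and f u' = t
      have hst1 : T.dist s t = 1 := SimpleGraph.dist_eq_one_iff_adj.mpr hst
      have key : f u = s ∧ f u' = t := by
        set c := f u with hc
        set c' := f u' with hc'
        have d1 : T.dist c' s ≤ 1 + T.dist c s := by
          have := hT.isConnected.dist_triangle (u := c') (v := c) (w := s)
          have : T.dist c' c ≤ 1 := SimpleGraph.dist_le (Walk.cons hTadj.symm Walk.nil)
          omega
        have d2 : T.dist c t ≤ 1 + T.dist c' t := by
          have := hT.isConnected.dist_triangle (u := c) (v := c') (w := t)
          have : T.dist c c' ≤ 1 := SimpleGraph.dist_le (Walk.cons hTadj Walk.nil)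
          omega
        have hctk : T.dist c' t = T.dist c s := by omega
        have haway := tree_away hT (T.dist c t) (a := c) (a₁ := c') (b := t) (c := s) rfl hTadj (by omega) (by omega)
        have e1 := dcomm T s c; have e2 := dcomm T s t; have e3 := dcomm T t c
        have hcs : T.dist c s = 0 := by omega
        have hc't : T.dist c' t = 0 := by omega
        constructor
        · exact (hT.isConnected.dist_eq_zero_iff.mp hcs)
        · exact (hT.isConnected.dist_eq_zero_iff.mp hc't)
      have := huniq (u, u') key.1 key.2 h'
      have hua : u = a := congrArg Prod.fst this
      have hu'b : u' = b := congrArg Prod.snd this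
      have h0 : K.dist u a = 0 := by rw [hua]; exact SimpleGraph.dist_self
      have hle : K.dist b v ≤ w'.length := by rw [← hu'b]; exact SimpleGraph.dist_le w'
      rw [Walk.length_cons]
      omega

lemma bridge_eq (hT : T.IsTree) (hK : K.Connected)
    (hAdj : ∀ a b : VK, K.Adj a b → f a = f b ∨ T.Adj (f a) (f b))
    {s t : VT} (hst : T.Adj s t) {a b : VK} (ha : f a = s) (hb : f b = t) (hab : K.Adj a b)
    (huniq : ∀ q : VK × VK, f q.1 = s → f q.2 = t → K.Adj q.1 q.2 → q = (a, b))
    {u v : VK}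
    (hu : T.dist (f u) s + 1 = T.dist (f u) t)
    (hv : T.dist (f v) t + 1 = T.dist (f v) s) :
    K.dist u v = K.dist u a + 1 + K.dist b v := by
  obtain ⟨w, hw⟩ := (hK u v).exists_walk_length_eq_dist
  have hge := cross_walk hT hK hAdj hst ha hb hab huniq w hu hv
  have t1 := hK.dist_triangle (u := u) (v := a) (w := v)
  have t2 := hK.dist_triangle (u := a) (v := b) (w := v)
  have t3 : K.dist a b ≤ 1 := SimpleGraph.dist_le (Walk.cons hab Walk.nil)
  omega

/-- distance within a fiber is realized inside the fiber: `≤` direction. -/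
lemma fiber_dist_le {t : VT}
    (hFib : ∀ t : VT, (f ⁻¹' {t}).Nonempty → (K.induce (f ⁻¹' {t})).Connected)
    {u v : VK} (hu : f u = t) (hv : f v = t) :
    K.dist u v ≤ (K.induce (f ⁻¹' {t})).dist ⟨u, hu⟩ ⟨v, hv⟩ := by
  have hconn := hFib t ⟨u, hu⟩
  obtain ⟨p, hp⟩ := (hconn ⟨u, hu⟩ ⟨v, hv⟩).exists_walk_length_eq_dist
  have := SimpleGraph.dist_le (p.map (SimpleGraph.Embedding.induce (f ⁻¹' {t})).toHom)
  rwa [SimpleGraph.Walk.length_map, hp] at this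

lemma fiber_dist_ge {t : VT} (hT : T.IsTree) (hK : K.Connected)
    (hAdj : ∀ a b : VK, K.Adj a b → f a = f b ∨ T.Adj (f a) (f b))
    (hFib : ∀ t : VT, (f ⁻¹' {t}).Nonempty → (K.induce (f ⁻¹' {t})).Connected)
    (hEdge : ∀ s t : VT, T.Adj s t → ∃! p : VK × VK, f p.1 = s ∧ f p.2 = t ∧ K.Adj p.1 p.2) :
    ∀ n {u v : VK} (hu : f u = t) (hv : f v = t), K.dist u v = n →
    (K.induce (f ⁻¹' {t})).dist ⟨u, hu⟩ ⟨v, hv⟩ ≤ n := by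
  intro n
  induction n with
  | zero =>
    intro u v hu hv hn
    have : u = v := (hK.dist_eq_zero_iff (u := u) (v := v)).mp hn
    subst this
    simp [SimpleGraph.dist_self]
  | succ n ih =>
    intro u v hu hv hn
    have hconn := hFib t ⟨u, hu⟩
    obtain ⟨w, hw⟩ := (hK u v).exists_walk_length_eq_dist
    rw [hn] at hw
    cases w with
    | nil => simp at hw
    | cons h' w' =>
      rename_i u'
      rw [Walk.length_cons] at hw
      have hd' : K.dist u' v ≤ n := by
        have := SimpleGraph.dist_le w'
        omega
      -- second vertex stays in the fiber
      have hfu' : f u' = t := by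
        by_contra hne
        have hTadj : T.Adj t (f u') := by
          rcases hAdj u u' h' with he | he
          · rw [hu] at he; exact absurd he.symm hne
          · rwa [hu] at he
        obtain ⟨pr, hpr, hprU⟩ := hEdge (f u') t hTadj.symm
        have hput : (u', u) = pr := by
          have := hprU (u', u) ⟨rfl, hu, h'.symm⟩
          exact this
        have huniq : ∀ q : VK × VK, f q.1 = f u' → f q.2 = t → K.Adj q.1 q.2 → q = (u', u) := by
          intro q h1 h2 h3
          exact (hprU q ⟨h1, h2, h3⟩).trans hput.symm
        have hst1 : T.dist (f u') t = 1 := SimpleGraph.dist_eq_one_iff_adj.mpr hTadj.symm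
        have h00 : T.dist (f u') (f u') = 0 := SimpleGraph.dist_self
        have h00' : T.dist t t = 0 := SimpleGraph.dist_self
        have e1 := dcomm T t (f u')
        have hcw := cross_walk hT hK hAdj hTadj.symm rfl hu h'.symm huniq w'
          (by omega) (by rw [hv]; omega)
        have h0 : K.dist u' u' = 0 := SimpleGraph.dist_self
        have : K.dist u v ≤ n + 1 := by omega
        have hKd := SimpleGraph.dist_le w'
        omega
      -- now recurse
      have hadj_ind : (K.induce (f ⁻¹' {t})).Adj ⟨u, hu⟩ ⟨u', hfu'⟩ := by
        simp [SimpleGraph.comap_adj, h']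
      have heq : K.dist u' v = n := by
        have t1 := hK.dist_triangle (u := u) (v := u') (w := v)
        have t2 : K.dist u u' ≤ 1 := SimpleGraph.dist_le (Walk.cons h' Walk.nil)
        omega
      have hrec := ih hfu' hv heq
      have t3 := hconn.dist_triangle (u := (⟨u, hu⟩ : f ⁻¹' {t}))
        (v := ⟨u', hfu'⟩) (w := ⟨v, hv⟩)
      have t4 : (K.induce (f ⁻¹' {t})).dist ⟨u, hu⟩ ⟨u', hfu'⟩ ≤ 1 :=
        SimpleGraph.dist_le (Walk.cons hadj_ind Walk.nil)
      omega

variable (K T f) in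
/-- The canonical `K`-edge above a tree edge `(s,t)` (junk if not adjacent). -/
noncomputable def epair
    (hEdge : ∀ s t : VT, T.Adj s t → ∃! p : VK × VK, f p.1 = s ∧ f p.2 = t ∧ K.Adj p.1 p.2)
    (x₀ : VK) (s t : VT) : VK × VK := by
  classical
  exact if h : T.Adj s t then (hEdge s t h).exists.choose else (x₀, x₀)

lemma epair_spec
    {hEdge : ∀ s t : VT, T.Adj s t → ∃! p : VK × VK, f p.1 = s ∧ f p.2 = t ∧ K.Adj p.1 p.2}
    {x₀ : VK} {s t : VT} (h : T.Adj s t) :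
    f (epair K T f hEdge x₀ s t).1 = s ∧ f (epair K T f hEdge x₀ s t).2 = t ∧
      K.Adj (epair K T f hEdge x₀ s t).1 (epair K T f hEdge x₀ s t).2 := by
  rw [epair]
  rw [dif_pos h]
  exact (hEdge s t h).exists.choose_spec

lemma epair_uniq
    {hEdge : ∀ s t : VT, T.Adj s t → ∃! p : VK × VK, f p.1 = s ∧ f p.2 = t ∧ K.Adj p.1 p.2}
    {x₀ : VK} {s t : VT} (h : T.Adj s t) :
    ∀ q : VK × VK, f q.1 = s → f q.2 = t → K.Adj q.1 q.2 → q = epair K T f hEdge x₀ s t := by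
  intro q h1 h2 h3
  obtain ⟨pr, hpr, hprU⟩ := hEdge s t h
  have e1 : q = pr := hprU q ⟨h1, h2, h3⟩
  have e2 : epair K T f hEdge x₀ s t = pr := by
    apply hprU
    obtain ⟨a1, a2, a3⟩ := epair_spec (hEdge := hEdge) (x₀ := x₀) h
    exact ⟨a1, a2, a3⟩
  rw [e1, e2]

lemma gate_step_adj (hT : T.IsTree) {m : VT} {u : VK} (h : f u ≠ m) :
    T.Adj (tstep hT m (f u)) m :=
  (tstep_adj hT (Ne.symm h)).symm

variable (K T f) in
/-- Gate of `u` in the fiber over `m`. -/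
noncomputable def gate (hT : T.IsTree)
    (hEdge : ∀ s t : VT, T.Adj s t → ∃! p : VK × VK, f p.1 = s ∧ f p.2 = t ∧ K.Adj p.1 p.2)
    (x₀ : VK) (m : VT) (u : VK) : VK := by
  classical
  exact if f u = m then u else (epair K T f hEdge x₀ (tstep hT m (f u)) m).2

variable (K T f) in
/-- Distance from `u` to its gate in the fiber over `m`. -/
noncomputable def galpha (hT : T.IsTree)
    (hEdge : ∀ s t : VT, T.Adj s t → ∃! p : VK × VK, f p.1 = s ∧ f p.2 = t ∧ K.Adj p.1 p.2)
    (x₀ : VK) (m : VT) (u : VK) : ℕ := by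
  classical
  exact if f u = m then 0 else K.dist u (epair K T f hEdge x₀ (tstep hT m (f u)) m).1 + 1

section Gates

variable (hT : T.IsTree) (hK : K.Connected)
  (hAdj : ∀ a b : VK, K.Adj a b → f a = f b ∨ T.Adj (f a) (f b))
  (hEdge : ∀ s t : VT, T.Adj s t → ∃! p : VK × VK, f p.1 = s ∧ f p.2 = t ∧ K.Adj p.1 p.2)
  (x₀ : VK) (m : VT)

include hT hK hAdj hEdge

lemma gate_mem (u : VK) : f (gate K T f hT hEdge x₀ m u) = m := by
  rw [gate]
  by_cases h : f u = m
  · rwa [if_pos h]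
  · rw [if_neg h]
    exact (epair_spec (x₀ := x₀) (gate_step_adj hT h)).2.1

lemma gate_formula {u : VK} {p : VK} (hp : f p = m) :
    K.dist u p = galpha K T f hT hEdge x₀ m u +
      K.dist (gate K T f hT hEdge x₀ m u) p := by
  by_cases h : f u = m
  · rw [gate, galpha, if_pos h, if_pos h, Nat.zero_add]
  · rw [gate, galpha, if_neg h, if_neg h]
    have hadj : T.Adj (tstep hT m (f u)) m := gate_step_adj hT h
    obtain ⟨ha, hb, hab⟩ := epair_spec (hEdge := hEdge) (x₀ := x₀) hadj
    have hu : T.dist (f u) (tstep hT m (f u)) + 1 = T.dist (f u) m := by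
      have h2 := tstep_dist hT (Ne.symm h)
      have e1 := dcomm T (tstep hT m (f u)) (f u)
      have e2 := dcomm T m (f u)
      omega
    have hv : T.dist (f p) m + 1 = T.dist (f p) (tstep hT m (f u)) := by
      rw [hp]
      have h0 : T.dist m m = 0 := SimpleGraph.dist_self
      have h1 : T.dist m (tstep hT m (f u)) = 1 :=
        SimpleGraph.dist_eq_one_iff_adj.mpr hadj.symm
      omega
    have := bridge_eq hT hK hAdj hadj ha hb hab
      (fun q h1 h2 h3 => epair_uniq (hEdge := hEdge) (x₀ := x₀) hadj q h1 h2 h3) hu hv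
    omega

lemma gate_alpha (u : VK) :
    K.dist u (gate K T f hT hEdge x₀ m u) = galpha K T f hT hEdge x₀ m u := by
  have := gate_formula hT hK hAdj hEdge x₀ m
    (u := u) (p := gate K T f hT hEdge x₀ m u) (gate_mem hT hK hAdj hEdge x₀ m u)
  have h0 : K.dist (gate K T f hT hEdge x₀ m u) (gate K T f hT hEdge x₀ m u) = 0 :=
    SimpleGraph.dist_self
  omega

lemma gate_split {u v : VK}
    (hbet : T.dist (f u) m + T.dist m (f v) = T.dist (f u) (f v)) :
    K.dist u v = galpha K T f hT hEdge x₀ m u +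
      K.dist (gate K T f hT hEdge x₀ m u) (gate K T f hT hEdge x₀ m v) +
      galpha K T f hT hEdge x₀ m v := by
  by_cases hu : f u = m
  · have hgu : gate K T f hT hEdge x₀ m u = u := by rw [gate, if_pos hu]
    have hau : galpha K T f hT hEdge x₀ m u = 0 := by rw [galpha, if_pos hu]
    have := gate_formula hT hK hAdj hEdge x₀ m (u := v) (p := u) hu
    have e1 := dcomm K u v
    have e2 := dcomm K (gate K T f hT hEdge x₀ m v) u
    rw [hgu, hau]
    omega
  by_cases hv : f v = m
  · have hgv : gate K T f hT hEdge x₀ m v = v := by rw [gate, if_pos hv]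
    have hav : galpha K T f hT hEdge x₀ m v = 0 := by rw [galpha, if_pos hv]
    have := gate_formula hT hK hAdj hEdge x₀ m (u := u) (p := v) hv
    rw [hgv, hav]
    omega
  · -- both outside the fiber
    have hsne : tstep hT m (f u) ≠ tstep hT m (f v) :=
      tree_step_ne_of_bet hT hbet (Ne.symm hu) (Ne.symm hv)
    have hadj : T.Adj (tstep hT m (f u)) m := gate_step_adj hT hu
    obtain ⟨ha, hb, hab⟩ := epair_spec (hEdge := hEdge) (x₀ := x₀) hadj
    have hu' : T.dist (f u) (tstep hT m (f u)) + 1 = T.dist (f u) m := by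
      have h2 := tstep_dist hT (Ne.symm hu)
      have e1 := dcomm T (tstep hT m (f u)) (f u)
      have e2 := dcomm T m (f u)
      omega
    have hv' : T.dist (f v) m + 1 = T.dist (f v) (tstep hT m (f u)) := by
      rcases tree_dichotomy hT (tstep_adj hT (Ne.symm hu)) (f v) with hh | hh
      · exact hh
      · exfalso
        apply hsne
        refine tree_step_unique hT (a := f v) (tstep_adj hT (Ne.symm hu))
          (tstep_adj hT (Ne.symm hv)) ?_ ?_
        · have e1 := dcomm T (f v) (tstep hT m (f u))
          have e2 := dcomm T (f v) m
          omega
        · exact tstep_dist hT (Ne.symm hv)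
    have hbr := bridge_eq hT hK hAdj hadj ha hb hab
      (fun q h1 h2 h3 => epair_uniq (hEdge := hEdge) (x₀ := x₀) hadj q h1 h2 h3) hu' hv'
    have hgf := gate_formula hT hK hAdj hEdge x₀ m (u := v)
      (p := (epair K T f hEdge x₀ (tstep hT m (f u)) m).2) hb
    have hgu : gate K T f hT hEdge x₀ m u =
        (epair K T f hEdge x₀ (tstep hT m (f u)) m).2 := by
      rw [gate, if_neg hu]
    have hau : galpha K T f hT hEdge x₀ m u =
        K.dist u (epair K T f hEdge x₀ (tstep hT m (f u)) m).1 + 1 := by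
      rw [galpha, if_neg hu]
    rw [hgu, hau]
    have e1 := dcomm K (epair K T f hEdge x₀ (tstep hT m (f u)) m).2 v
    have e2 := dcomm K (gate K T f hT hEdge x₀ m v)
      (epair K T f hEdge x₀ (tstep hT m (f u)) m).2
    omega

omit hK hAdj in
lemma gate_eq_of_not_bet {u v : VK}
    (hbet : T.dist (f u) m + T.dist m (f v) ≠ T.dist (f u) (f v)) :
    gate K T f hT hEdge x₀ m u = gate K T f hT hEdge x₀ m v := by
  obtain ⟨hma, hmc, hstep⟩ := tree_not_bet hT hbet
  rw [gate, gate, if_neg (Ne.symm hma), if_neg (Ne.symm hmc), hstep]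

end Gates

lemma fiber_dist_eq (hT : T.IsTree) (hK : K.Connected)
    (hAdj : ∀ a b : VK, K.Adj a b → f a = f b ∨ T.Adj (f a) (f b))
    (hFib : ∀ t : VT, (f ⁻¹' {t}).Nonempty → (K.induce (f ⁻¹' {t})).Connected)
    (hEdge : ∀ s t : VT, T.Adj s t → ∃! p : VK × VK, f p.1 = s ∧ f p.2 = t ∧ K.Adj p.1 p.2)
    {t : VT} {u v : VK} (hu : f u = t) (hv : f v = t) :
    (K.induce (f ⁻¹' {t})).dist ⟨u, hu⟩ ⟨v, hv⟩ = K.dist u v :=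
  le_antisymm (fiber_dist_ge hT hK hAdj hFib hEdge _ hu hv rfl) (fiber_dist_le hFib hu hv)

end KLemmas

lemma hyp_sum {V : Type} {G : SimpleGraph V} {δ : ℝ} (h : GraphHyperbolic G δ)
    (a b c d : V) :
    gdist G a c + gdist G b d ≤
      max (gdist G a b + gdist G c d) (gdist G b c + gdist G a d) + 2*δ := by
  have h0 := h a b c d
  simp only [gprod] at h0
  rcases min_le_iff.mp h0 with h' | h'
  · have := le_max_left (gdist G a b + gdist G c d) (gdist G b c + gdist G a d)
    linarith
  · have := le_max_right (gdist G a b + gdist G c d) (gdist G b c + gdist G a d)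
    linarith

lemma master {VK VT : Type} (K : SimpleGraph VK) (T : SimpleGraph VT) (f : VK → VT)
    (hTop : TreeOfSpaces K T f) (hK : K.Connected) {δ : ℝ} (hδ : 0 ≤ δ)
    (hyp : ∀ t : VT, GraphHyperbolic (K.induce (f ⁻¹' {t})) δ) :
    GraphHyperbolic K δ := by
  classical
  obtain ⟨hT, hAdj, hFib, hEdge⟩ := hTop
  obtain ⟨x₀⟩ := hK.nonempty
  intro x y z p
  obtain ⟨m, hXY, hXZ, hYZ⟩ := tree_median hT _ (f y) (f x) (f p) rfl
  set g : VK → VK := gate K T f hT hEdge x₀ m with hg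
  set α : VK → ℕ := galpha K T f hT hEdge x₀ m with hα
  have hsplit : ∀ u v : VK,
      T.dist (f u) m + T.dist m (f v) = T.dist (f u) (f v) →
      K.dist u v = α u + K.dist (g u) (g v) + α v := by
    intro u v hb
    exact gate_split hT hK hAdj hEdge x₀ m hb
  have halpha : ∀ u : VK, K.dist u (g u) = α u := fun u =>
    gate_alpha hT hK hAdj hEdge x₀ m u
  have hmem : ∀ u : VK, f (g u) = m := fun u => gate_mem hT hK hAdj hEdge x₀ m u
  -- main reduction: the four-point inequality in sum form
  have key : ((K.dist y p : ℝ)) + ((K.dist x z : ℝ)) ≤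
      max (((K.dist y x : ℝ)) + ((K.dist p z : ℝ)))
        (((K.dist x p : ℝ)) + ((K.dist y z : ℝ))) + 2*δ := by
    by_cases hB1 : T.dist (f y) m + T.dist m (f z) = T.dist (f y) (f z)
    · by_cases hB2 : T.dist (f x) m + T.dist m (f z) = T.dist (f x) (f z)
      · by_cases hB3 : T.dist (f p) m + T.dist m (f z) = T.dist (f p) (f z)
        · -- all six pairs split through the fiber over m : use hyperbolicity of the fiber
          have d1 := hsplit y x hXY
          have d2 := hsplit y p hXZ
          have d3 := hsplit x p hYZ
          have d4 := hsplit y z hB1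
          have d5 := hsplit x z hB2
          have d6 := hsplit p z hB3
          have piece := hyp_sum (hyp m) ⟨g y, hmem y⟩ ⟨g x, hmem x⟩ ⟨g p, hmem p⟩ ⟨g z, hmem z⟩
          simp only [gdist] at piece
          rw [fiber_dist_eq hT hK hAdj hFib hEdge (hmem y) (hmem p),
              fiber_dist_eq hT hK hAdj hFib hEdge (hmem x) (hmem z),
              fiber_dist_eq hT hK hAdj hFib hEdge (hmem y) (hmem x),
              fiber_dist_eq hT hK hAdj hFib hEdge (hmem p) (hmem z),
              fiber_dist_eq hT hK hAdj hFib hEdge (hmem x) (hmem p),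
              fiber_dist_eq hT hK hAdj hFib hEdge (hmem y) (hmem z)] at piece
          have r1 := congrArg (Nat.cast : ℕ → ℝ) d1; push_cast at r1
          have r2 := congrArg (Nat.cast : ℕ → ℝ) d2; push_cast at r2
          have r3 := congrArg (Nat.cast : ℕ → ℝ) d3; push_cast at r3
          have r4 := congrArg (Nat.cast : ℕ → ℝ) d4; push_cast at r4
          have r5 := congrArg (Nat.cast : ℕ → ℝ) d5; push_cast at r5
          have r6 := congrArg (Nat.cast : ℕ → ℝ) d6; push_cast at r6
          rcases le_total ((↑(K.dist (g y) (g x)) : ℝ) + ↑(K.dist (g p) (g z)))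
              ((↑(K.dist (g x) (g p)) : ℝ) + ↑(K.dist (g y) (g z))) with hm | hm
          · rw [max_eq_right hm] at piece
            have h9 := le_max_right ((↑(K.dist y x) : ℝ) + ↑(K.dist p z))
              ((↑(K.dist x p) : ℝ) + ↑(K.dist y z))
            linarith
          · rw [max_eq_left hm] at piece
            have h9 := le_max_left ((↑(K.dist y x) : ℝ) + ↑(K.dist p z))
              ((↑(K.dist x p) : ℝ) + ↑(K.dist y z))
            linarith
        · -- g p = g z : the two sums S2 and S3 agree
          have hgpz : g p = g z := gate_eq_of_not_bet hT hEdge x₀ m hB3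
          have d2 := hsplit y p hXZ
          have d5 := hsplit x z hB2
          have d3 := hsplit x p hYZ
          have d4 := hsplit y z hB1
          have hn : K.dist y p + K.dist x z = K.dist x p + K.dist y z := by
            rw [d2, d5, d3, d4, hgpz]
            omega
          have h9 := le_max_right ((↑(K.dist y x) : ℝ) + ↑(K.dist p z))
            ((↑(K.dist x p) : ℝ) + ↑(K.dist y z))
          have r := congrArg (Nat.cast : ℕ → ℝ) hn; push_cast at r
          linarith
      · -- g x = g z
        have hgxz : g x = g z := gate_eq_of_not_bet hT hEdge x₀ m hB2
        have d2 := hsplit y p hXZ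
        have d3 := hsplit x p hYZ
        have d4 := hsplit y z hB1
        have htri : K.dist x z ≤ α x + α z := by
          have t1 := hK.dist_triangle (u := x) (v := g x) (w := z)
          have t2 := halpha x
          have t3 := halpha z
          have t4 := dcomm K (g z) z
          rw [hgxz] at t1 t2
          omega
        have htr2 : K.dist (g y) (g p) ≤ K.dist (g y) (g z) + K.dist (g z) (g p) := by
          have := hK.dist_triangle (u := g y) (v := g z) (w := g p)
          omega
        have hn : K.dist y p + K.dist x z ≤ K.dist x p + K.dist y z := by
          rw [d2, d3, d4, hgxz]
          have e1 := dcomm K (g z) (g p)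
          omega
        have h9 := le_max_right ((↑(K.dist y x) : ℝ) + ↑(K.dist p z))
          ((↑(K.dist x p) : ℝ) + ↑(K.dist y z))
        have r : (↑(K.dist y p) + ↑(K.dist x z) : ℝ) ≤ ↑(K.dist x p) + ↑(K.dist y z) := by
          exact_mod_cast hn
        linarith
    · -- g y = g z : S2 = S1
      have hgyz : g y = g z := gate_eq_of_not_bet hT hEdge x₀ m hB1
      have hB2' : T.dist (f x) m + T.dist m (f z) = T.dist (f x) (f z) :=
        tree_bet_trans hT hB1 hXY
      have hB3' : T.dist (f p) m + T.dist m (f z) = T.dist (f p) (f z) :=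
        tree_bet_trans hT hB1 hXZ
      have d1 := hsplit y x hXY
      have d2 := hsplit y p hXZ
      have d5 := hsplit x z hB2'
      have d6 := hsplit p z hB3'
      have hn : K.dist y p + K.dist x z = K.dist y x + K.dist p z := by
        rw [d1, d2, d5, d6, hgyz]
        have e1 := dcomm K (g z) (g x)
        have e2 := dcomm K (g z) (g p)
        omega
      have h9 := le_max_left ((↑(K.dist y x) : ℝ) + ↑(K.dist p z))
        ((↑(K.dist x p) : ℝ) + ↑(K.dist y z))
      have r := congrArg (Nat.cast : ℕ → ℝ) hn; push_cast at r
      linarith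
  -- conclude the Gromov four-point condition
  have c1 : ((K.dist x y : ℝ)) = ↑(K.dist y x) := by exact_mod_cast dcomm K x y
  have c2 : ((K.dist z p : ℝ)) = ↑(K.dist p z) := by exact_mod_cast dcomm K z p
  rcases le_total ((↑(K.dist y x) : ℝ) + ↑(K.dist p z)) ((↑(K.dist x p) : ℝ) + ↑(K.dist y z))
    with hm | hm
  · rw [max_eq_right hm] at key
    refine le_trans (min_le_right _ _) ?_
    simp only [gprod, gdist]
    linarith
  · rw [max_eq_left hm] at key
    refine le_trans (min_le_left _ _) ?_
    simp only [gprod, gdist]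
    linarith

/-- If each vertex space of a connected tree of spaces is `δ`-hyperbolic, then `K` is
`δ'`-hyperbolic, where `δ'` depends only on `δ`. -/
theorem hyperbolic_tree_of_spaces (δ : ℝ) (hδ : 0 ≤ δ) :
    ∃ δ' : ℝ, ∀ (VK VT : Type) (K : SimpleGraph VK) (T : SimpleGraph VT) (f : VK → VT),
      TreeOfSpaces K T f → K.Connected →
      (∀ t : VT, GraphHyperbolic (K.induce (f ⁻¹' {t})) δ) →
      GraphHyperbolic K δ' := by
  exact ⟨δ, fun VK VT K T f hTop hK hyp => master K T f hTop hK hδ hyp⟩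
end

section
/- Let K be a tree of spaces over a tree T (via f : K → T as above), and let L ⊆ K be a connected subgraph such that for each vertex v of T the intersection L ∩ f⁻¹(v) is κ-quasiconvex in the vertex space f⁻¹(v), and L contains every edge of K mapping to an edge of f(L). Then L is κ'-quasiconvex in K for some κ' depending only on κ. -/
/-- A set `S` of vertices is `κ`-quasiconvex in the graph `G`: every geodesic of `G`
with endpoints in `S` lies in the `κ`-neighborhood of `S`. -/
def QuasiconvexIn {V : Type*} (G : SimpleGraph V) (S : Set V) (κ : ℕ) : Prop :=
  ∀ a b : V, a ∈ S → b ∈ S → ∀ w : G.Walk a b, w.length = G.dist a b →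
    ∀ x ∈ w.support, ∃ s ∈ S, G.dist x s ≤ κ

namespace QTSAux
open SimpleGraph Walk List
open scoped Classical

variable {VK VT : Type} {K : SimpleGraph VK} {T : SimpleGraph VT} {f : VK → VT}

/-- Project a walk in `K` to a walk in `T`, collapsing fiber-internal edges. -/
noncomputable def projWalk (hadj : ∀ a b : VK, K.Adj a b → f a = f b ∨ T.Adj (f a) (f b)) :
    {a b : VK} → K.Walk a b → T.Walk (f a) (f b)
  | _, _, .nil => .nil
  | a, _, .cons (v := c) h w =>
    if he : f a = f c then (projWalk hadj w).copy he.symm rfl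
    else .cons ((hadj _ _ h).resolve_left he) (projWalk hadj w)

variable (hadj : ∀ a b : VK, K.Adj a b → f a = f b ∨ T.Adj (f a) (f b))

lemma mem_support_projWalk : ∀ {a b : VK} (w : K.Walk a b) (z : VK),
    z ∈ w.support → f z ∈ (projWalk hadj w).support
  | _, _, .nil, z, hz => by
      simp only [Walk.support_nil, List.mem_singleton] at hz
      subst hz; simp [projWalk]
  | a, b, .cons (v := c) h w, z, hz => by
      simp only [Walk.support_cons, List.mem_cons] at hz
      rw [projWalk]
      split
      · rename_i he
        rw [Walk.support_copy]
        rcases hz with rfl | hz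
        · rw [he]; exact (projWalk hadj w).start_mem_support
        · exact mem_support_projWalk w z hz
      · rw [Walk.support_cons]
        rcases hz with rfl | hz
        · exact List.mem_cons_self
        · exact List.mem_cons_of_mem _ (mem_support_projWalk w z hz)

lemma support_projWalk_subset : ∀ {a b : VK} (w : K.Walk a b) (r : VT),
    r ∈ (projWalk hadj w).support → ∃ z ∈ w.support, f z = r
  | _, _, .nil, r, hr => by
      simp only [projWalk, Walk.support_nil, List.mem_singleton] at hr
      exact ⟨_, by simp, hr.symm⟩
  | a, b, .cons (v := c) h w, r, hr => by
      rw [projWalk] at hr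
      split at hr
      · rw [Walk.support_copy] at hr
        obtain ⟨z, hz, hzr⟩ := support_projWalk_subset w r hr
        exact ⟨z, by simp [hz], hzr⟩
      · rw [Walk.support_cons, List.mem_cons] at hr
        rcases hr with rfl | hr
        · exact ⟨a, by simp, rfl⟩
        · obtain ⟨z, hz, hzr⟩ := support_projWalk_subset w r hr
          exact ⟨z, by simp [hz], hzr⟩

/-- The function extracting the `T`-edge of a crossing dart. -/
noncomputable def dartEdge (f : VK → VT) (d : K.Dart) : Option (Sym2 VT) :=
  if f d.toProd.1 = f d.toProd.2 then none else some s(f d.toProd.1, f d.toProd.2)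

lemma edges_projWalk_sublist : ∀ {a b : VK} (w : K.Walk a b),
    (projWalk hadj w).edges <+ w.darts.filterMap (dartEdge f)
  | _, _, .nil => by simp [projWalk]
  | a, b, .cons (v := c) h w => by
      rw [projWalk, Walk.darts_cons, List.filterMap_cons]
      split
      · rename_i he
        rw [Walk.edges_copy]
        have : dartEdge f (⟨(a, c), h⟩ : K.Dart) = none := by simp [dartEdge, he]
        rw [this]
        exact edges_projWalk_sublist w
      · rename_i he
        have : dartEdge f (⟨(a, c), h⟩ : K.Dart) = some s(f a, f c) := by simp [dartEdge, he]
        rw [this, Walk.edges_cons]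
        exact List.Sublist.cons₂ _ (edges_projWalk_sublist w)

lemma nodup_filterMap_of_pairwise {α β : Type*} (g : α → Option β) :
    ∀ (l : List α), l.Pairwise (fun d d' => ∀ e, e ∈ g d → e ∈ g d' → False) →
      (l.filterMap g).Nodup := by
  intro l
  induction l with
  | nil => simp
  | cons d l ih =>
    intro h
    rw [List.pairwise_cons] at h
    rw [List.filterMap_cons]
    cases hg : g d with
    | none => exact ih h.2
    | some e =>
      rw [List.nodup_cons]
      refine ⟨fun he => ?_, ih h.2⟩
      rw [List.mem_filterMap] at he
      obtain ⟨d', hd', he'⟩ := he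
      exact h.1 d' hd' e (by rw [hg]; rfl) (by rw [he']; rfl)

lemma darts_pairwise
    (hadj : ∀ a b : VK, K.Adj a b → f a = f b ∨ T.Adj (f a) (f b))
    (huniq : ∀ s t : VT, T.Adj s t → ∃! p : VK × VK, f p.1 = s ∧ f p.2 = t ∧ K.Adj p.1 p.2)
    {a b : VK} (w : K.Walk a b) (hw : w.IsPath) :
    w.darts.Pairwise (fun d d' => ∀ e, e ∈ dartEdge f d → e ∈ dartEdge f d' → False) := by
  have h3 : w.darts.Pairwise (fun d d' => d.edge ≠ d'.edge) :=
    List.pairwise_map.mp hw.isTrail.edges_nodup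
  refine h3.imp ?_
  intro d d' hne e he he'
  unfold dartEdge at he he'
  split at he
  · simp at he
  rename_i h1
  split at he'
  · simp at he'
  rename_i h1'
  simp only [Option.mem_def, Option.some_inj] at he he'
  subst he
  have hTadj : T.Adj (f d.toProd.1) (f d.toProd.2) := (hadj _ _ d.adj).resolve_left h1
  obtain ⟨pp, hp, hup⟩ := huniq _ _ hTadj
  have heq := he'.symm
  rw [Sym2.eq_iff] at heq
  rcases heq with ⟨e1, e2⟩ | ⟨e1, e2⟩
  · have h4 := hup d.toProd ⟨rfl, rfl, d.adj⟩
    have h5 := hup d'.toProd ⟨e1.symm, e2.symm, d'.adj⟩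
    exact hne (congrArg Dart.edge (SimpleGraph.Dart.ext _ _ (h4.trans h5.symm)))
  · have h4 := hup d.toProd ⟨rfl, rfl, d.adj⟩
    have h5 := hup d'.toProd.swap ⟨e1.symm, e2.symm, d'.adj.symm⟩
    have h6 : d = d'.symm := SimpleGraph.Dart.ext _ _ (h4.trans h5.symm)
    exact hne (by rw [h6, SimpleGraph.Dart.edge_symm])

lemma projWalk_isTrail
    (huniq : ∀ s t : VT, T.Adj s t → ∃! p : VK × VK, f p.1 = s ∧ f p.2 = t ∧ K.Adj p.1 p.2)
    {a b : VK} (w : K.Walk a b) (hw : w.IsPath) : (projWalk hadj w).IsTrail := by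
  rw [Walk.isTrail_def]
  exact (edges_projWalk_sublist hadj w).nodup
    (nodup_filterMap_of_pairwise _ _ (darts_pairwise hadj huniq w hw))

lemma isPath_of_isTrail_acyclic (hA : T.IsAcyclic) :
    ∀ {α β : VT} (c : T.Walk α β), c.IsTrail → c.IsPath := by
  intro α β c
  induction c with
  | nil => intro _; exact Walk.IsPath.nil
  | @cons α γ β h c ih =>
    intro ht
    rw [Walk.isTrail_cons] at ht
    have hp := ih ht.1
    rw [Walk.cons_isPath_iff]
    refine ⟨hp, fun hα => ?_⟩
    have hcyc : (Walk.cons h (c.takeUntil α hα)).IsCycle := by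
      refine ⟨⟨?_, by simp⟩, ?_⟩
      · rw [Walk.isTrail_cons]
        exact ⟨(hp.takeUntil hα).isTrail, fun he => ht.2 (Walk.edges_takeUntil_subset _ _ he)⟩
      · simpa using (hp.takeUntil hα).support_nodup
    exact hA _ hcyc

/-- `S` meets every fiber that the path `w` visits. -/
lemma meets (hT : T.IsTree)
    (hadj : ∀ a b : VK, K.Adj a b → f a = f b ∨ T.Adj (f a) (f b))
    (huniq : ∀ s t : VT, T.Adj s t → ∃! p : VK × VK, f p.1 = s ∧ f p.2 = t ∧ K.Adj p.1 p.2)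
    {S : Set VK} (hS : (K.induce S).Connected)
    {a b : VK} (ha : a ∈ S) (hb : b ∈ S) (w : K.Walk a b) (hw : w.IsPath) :
    ∀ z ∈ w.support, ∃ y ∈ S, f y = f z := by
  intro z hz
  have hP1 : (projWalk hadj w).IsPath :=
    isPath_of_isTrail_acyclic hT.IsAcyclic _ (projWalk_isTrail hadj huniq w hw)
  obtain ⟨wl⟩ := hS.preconnected ⟨a, ha⟩ ⟨b, hb⟩
  let ι : K.induce S →g K := ⟨Subtype.val, fun h => h⟩
  let wK : K.Walk a b := wl.map ι
  have hsupK : ∀ y ∈ wK.support, y ∈ S := by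
    intro y hy
    rw [Walk.support_map, List.mem_map] at hy
    obtain ⟨y', _, rfl⟩ := hy
    exact y'.2
  have hP2 : ((projWalk hadj wK).bypass).IsPath := Walk.bypass_isPath _
  have hEq : projWalk hadj w = (projWalk hadj wK).bypass := by
    have := SimpleGraph.isAcyclic_iff_path_unique.mp hT.IsAcyclic
      ⟨projWalk hadj w, hP1⟩ ⟨(projWalk hadj wK).bypass, hP2⟩
    exact congrArg Subtype.val this
  have hz1 : f z ∈ (projWalk hadj wK).support :=
    (Walk.support_bypass_subset _) (hEq ▸ mem_support_projWalk hadj w z hz)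
  obtain ⟨y, hy, hyz⟩ := support_projWalk_subset hadj wK (f z) hz1
  exact ⟨y, hsupK y hy, hyz⟩

lemma split_fiber {t : VT} : ∀ {x b : VK} (w : K.Walk x b), f x = t →
    (∀ y ∈ w.support, f y = t) ∨
    ∃ (q q' : VK) (u : K.Walk x q) (h : K.Adj q q') (v : K.Walk q' b),
      w = u.append (Walk.cons h v) ∧ (∀ y ∈ u.support, f y = t) ∧ f q' ≠ t := by
  intro x b w
  induction w with
  | nil =>
    intro hx; left; intro y hy
    simp only [Walk.support_nil, List.mem_singleton] at hy
    subst hy; exact hx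
  | @cons x c b h w ih =>
    intro hx
    by_cases hc : f c = t
    · rcases ih hc with hall | ⟨q, q', u, h', v, heq, hu, hq'⟩
      · left; intro y hy
        rw [Walk.support_cons, List.mem_cons] at hy
        rcases hy with rfl | hy
        · exact hx
        · exact hall y hy
      · right
        refine ⟨q, q', Walk.cons h u, h', v, ?_, ?_, hq'⟩
        · rw [Walk.cons_append, heq]
        · intro y hy
          rw [Walk.support_cons, List.mem_cons] at hy
          rcases hy with rfl | hy
          · exact hx
          · exact hu y hy
    · right
      refine ⟨x, c, Walk.nil, h, w, by rw [Walk.nil_append], ?_, hc⟩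
      intro y hy
      simp only [Walk.support_nil, List.mem_singleton] at hy
      subst hy; exact hx

lemma append4 {a b c d e : VK} (A : K.Walk a b) (B : K.Walk b c) (C : K.Walk c d)
    (D : K.Walk d e) :
    (A.append B).append (C.append D) = A.append ((B.append C).append D) := by
  simp [SimpleGraph.Walk.append_assoc]

lemma geodesic_of_append (hK : K.Connected) {a c b : VK} (α : K.Walk a c) (β : K.Walk c b)
    (h : (α.append β).length = K.dist a b) :
    α.length = K.dist a c ∧ β.length = K.dist c b := by
  have h1 := SimpleGraph.dist_le α
  have h2 := SimpleGraph.dist_le β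
  have h3 := hK.dist_triangle (u := a) (v := c) (w := b)
  rw [Walk.length_append] at h
  omega

lemma exists_induce_walk {A : Set VK} : ∀ {p q : VK} (m : K.Walk p q)
    (hm : ∀ y ∈ m.support, y ∈ A),
    ∃ m' : (K.induce A).Walk ⟨p, hm p m.start_mem_support⟩ ⟨q, hm q m.end_mem_support⟩,
      m'.length = m.length ∧ ∀ (y : A), (y : VK) ∈ m.support → y ∈ m'.support := by
  intro p q m
  induction m with
  | nil =>
    intro hm
    refine ⟨Walk.nil, rfl, ?_⟩
    intro y hy
    simp only [Walk.support_nil, List.mem_singleton] at hy ⊢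
    exact Subtype.ext hy
  | @cons p c q h m ih =>
    intro hm
    have hm' : ∀ y ∈ m.support, y ∈ A := fun y hy => hm y (by simp [hy])
    obtain ⟨m', hlen, hsup⟩ := ih hm'
    have hadj' : (K.induce A).Adj ⟨p, hm p (Walk.cons h m).start_mem_support⟩
        ⟨c, hm' c m.start_mem_support⟩ := h
    refine ⟨Walk.cons hadj' m', by simp [hlen], ?_⟩
    intro y hy
    rw [Walk.support_cons, List.mem_cons] at hy
    rcases hy with hy | hy
    · have hyp : y = ⟨p, hm p (Walk.cons h m).start_mem_support⟩ := Subtype.ext hy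
      rw [hyp, Walk.support_cons]
      exact List.mem_cons_self
    · rw [Walk.support_cons]
      exact List.mem_cons_of_mem _ (hsup y hy)

/-- Splitting off the fiber-initial segment of a walk, landing in `S`. -/
lemma half {S : Set VK} {x c : VK} (w' : K.Walk x c) (hc : c ∈ S)
    (hmeets : ∀ z ∈ w'.support, ∃ y ∈ S, f y = f z)
    (hE : ∀ a b : VK, K.Adj a b → f a ≠ f b →
        (∃ a' ∈ S, f a' = f a) → (∃ b' ∈ S, f b' = f b) → a ∈ S ∧ b ∈ S) :
    ∃ (q : VK) (u : K.Walk x q) (rest : K.Walk q c),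
      q ∈ S ∧ (∀ y ∈ u.support, f y = f x) ∧ w' = u.append rest := by
  rcases split_fiber w' rfl with hall | ⟨q, q', u, h, v, heq, hu, hq'⟩
  · exact ⟨c, w', Walk.nil, hc, hall, (Walk.append_nil _).symm⟩
  · have hq_t : f q = f x := hu q u.end_mem_support
    have hqmem : q ∈ w'.support := by
      rw [heq, Walk.mem_support_append_iff]; exact Or.inl u.end_mem_support
    have hq'mem : q' ∈ w'.support := by
      rw [heq, Walk.mem_support_append_iff]; refine Or.inr ?_
      rw [Walk.support_cons]
      exact List.mem_cons_of_mem _ v.start_mem_support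
    have hne : f q ≠ f q' := by rw [hq_t]; exact fun hh => hq' hh.symm
    exact ⟨q, u, Walk.cons h v, (hE q q' h hne (hmeets q hqmem) (hmeets q' hq'mem)).1, hu, heq⟩

end QTSAux

/-- Let `K` be a tree of spaces over `T` and let `L` be a connected subgraph (with
vertex set `S`) of `K` whose intersection with each vertex space is `κ`-quasiconvex
there, and which contains every edge of `K` joining two vertex spaces that `L` meets.
Then `L` is `κ'`-quasiconvex in `K`, where `κ'` depends only on `κ`. -/
theorem quasiconvex_tree_of_spaces (κ : ℕ) :
    ∃ κ' : ℕ, ∀ (VK VT : Type) (K : SimpleGraph VK) (T : SimpleGraph VT) (f : VK → VT),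
      TreeOfSpaces K T f → K.Connected →
      ∀ S : Set VK, (K.induce S).Connected →
      (∀ t : VT, QuasiconvexIn (K.induce (f ⁻¹' {t}))
        {x : (f ⁻¹' {t} : Set VK) | (x : VK) ∈ S} κ) →
      (∀ a b : VK, K.Adj a b → f a ≠ f b →
        (∃ a' ∈ S, f a' = f a) → (∃ b' ∈ S, f b' = f b) → a ∈ S ∧ b ∈ S) →
      QuasiconvexIn K S κ' := by
  classical
  refine ⟨κ, ?_⟩
  intro VK VT K T f hTS hK S hS hQ hE
  obtain ⟨hT, hadj, hconn, huniq⟩ := hTS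
  intro a b ha hb w hwlen x hx
  have hw : w.IsPath := w.isPath_of_length_eq_dist hwlen
  have hmeets : ∀ z ∈ w.support, ∃ y ∈ S, f y = f z :=
    QTSAux.meets hT hadj huniq hS ha hb w hw
  have hspec := w.take_spec hx
  set w1 := w.takeUntil x hx with hw1def
  set w2 := w.dropUntil x hx with hw2def
  obtain ⟨q, u, rest, hqS, huf, hw2eq⟩ := QTSAux.half w2 hb
    (fun z hz => hmeets z (SimpleGraph.Walk.support_dropUntil_subset w hx hz)) hE
  obtain ⟨p, u', rest', hpS, hu'f, hw1eq⟩ := QTSAux.half w1.reverse ha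
    (fun z hz => hmeets z (SimpleGraph.Walk.support_takeUntil_subset w hx
      (by rwa [SimpleGraph.Walk.support_reverse, List.mem_reverse] at hz))) hE
  set m := u'.reverse.append u with hmdef
  have hwdecomp : w = rest'.reverse.append (m.append rest) := by
    have h1 : w1 = rest'.reverse.append u'.reverse := by
      rw [← SimpleGraph.Walk.reverse_append, ← hw1eq, SimpleGraph.Walk.reverse_reverse]
    calc w = w1.append w2 := hspec.symm
    _ = (rest'.reverse.append u'.reverse).append (u.append rest) := by rw [← h1, ← hw2eq]
    _ = rest'.reverse.append (m.append rest) := by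
        rw [hmdef]; exact QTSAux.append4 _ _ _ _
  have hlen2 : (rest'.reverse.append (m.append rest)).length = K.dist a b := by
    rw [← hwdecomp]; exact hwlen
  have hmid := (QTSAux.geodesic_of_append hK _ _ hlen2).2
  have hmgeo := (QTSAux.geodesic_of_append hK _ _ hmid).1
  set A : Set VK := f ⁻¹' {f x} with hAdef
  have hmfib : ∀ y ∈ m.support, y ∈ A := by
    intro y hy
    rw [hmdef, SimpleGraph.Walk.mem_support_append_iff] at hy
    rcases hy with hy | hy
    · rw [SimpleGraph.Walk.support_reverse, List.mem_reverse] at hy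
      exact hu'f y hy
    · exact huf y hy
  have hxm : x ∈ m.support := by
    rw [hmdef, SimpleGraph.Walk.mem_support_append_iff]
    exact Or.inl u'.reverse.end_mem_support
  obtain ⟨m', hm'len, hm'sup⟩ := QTSAux.exists_induce_walk m hmfib
  have hreach : ∀ y z : A, (K.induce A).Reachable y z :=
    fun y z => (hconn (f x) ⟨x, rfl⟩).preconnected y z
  have hdistle : ∀ y z : A, K.dist (y : VK) z ≤ (K.induce A).dist y z := by
    intro y z
    obtain ⟨mm, hmm⟩ := (hreach y z).exists_walk_length_eq_dist
    calc K.dist (y : VK) z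
        ≤ (mm.map (⟨Subtype.val, fun h => h⟩ : K.induce A →g K)).length :=
          SimpleGraph.dist_le _
      _ = mm.length := SimpleGraph.Walk.length_map _ _
      _ = _ := hmm
  have hpA : p ∈ A := hmfib p m.start_mem_support
  have hqA : q ∈ A := hmfib q m.end_mem_support
  have hm'geo : m'.length = (K.induce A).dist ⟨p, hpA⟩ ⟨q, hqA⟩ := by
    have h1 : (K.induce A).dist ⟨p, hpA⟩ ⟨q, hqA⟩ ≤ m'.length := SimpleGraph.dist_le m'
    have h2 : K.dist p q ≤ (K.induce A).dist ⟨p, hpA⟩ ⟨q, hqA⟩ := hdistle ⟨p, hpA⟩ ⟨q, hqA⟩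
    omega
  obtain ⟨s', hs'S, hs'd⟩ := hQ (f x) ⟨p, hpA⟩ ⟨q, hqA⟩ hpS hqS m' hm'geo
    ⟨x, rfl⟩ (hm'sup ⟨x, rfl⟩ hxm)
  have hfin : K.dist x (s' : VK) ≤ (K.induce A).dist ⟨x, rfl⟩ s' := hdistle ⟨x, rfl⟩ s'
  exact ⟨s', hs'S, hfin.trans hs'd⟩
end
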